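/- On the reference tetrahedron with faces F_1 = {x_1=0}, F_2 = {x_2=0}, F_3 = {x_3=0}, F_4 = {x_1+x_2+x_3=1} (with outward unit normals n), the normal-normal component of the face tensor S^{F_m} restricted to face F_i satisfies (S^{F_m} n)·n = c δ_{im} for some nonzero constant c, i.e. it is a nonzero constant on face F_m and vanishes on all other faces. -/
import Mathlib


open Matrix

/-- The four face tensors of the TDNNS reference element. -/
def SF : Fin 4 → Matrix (Fin 3) (Fin 3) ℝ
  | 0 => !![-6, 1, 1; 1, 0, 1; 1, 1, 0]
  | 1 => !![0, 1, 1; 1, -6, 1; 1, 1, 0]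
  | 2 => !![0, 1, 1; 1, 0, 1; 1, 1, -6]
  | 3 => !![0, 1, 1; 1, 0, 1; 1, 1, 0]

/-- The two interior tensors of the TDNNS reference element. -/
def STen : Fin 2 → Matrix (Fin 3) (Fin 3) ℝ
  | 0 => !![0, 0, -1; 0, 0, 1; -1, 1, 0]
  | 1 => !![0, -1, 0; -1, 0, 1; 0, 1, 0]

/-- Outward unit normals of the reference tetrahedron's four faces. -/
noncomputable def refNormal : Fin 4 → (Fin 3 → ℝ)
  | 0 => fun i => if i = 0 then -1 else 0
  | 1 => fun i => if i = 1 then -1 else 0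
  | 2 => fun i => if i = 2 then -1 else 0
  | 3 => fun _ => 1 / Real.sqrt 3

/-- The normal-normal component of the face tensor `S^{F_m}` on face `F_i` of the reference
tetrahedron is a nonzero constant `c` for `i = m` and vanishes for `i ≠ m`. -/
theorem stmt2 (m : Fin 4) :
    ∃ c : ℝ, c ≠ 0 ∧ ∀ i : Fin 4,
      (SF m).mulVec (refNormal i) ⬝ᵥ refNormal i = if i = m then c else 0 := by
  have h3 : Real.sqrt 3 * Real.sqrt 3 = 3 := Real.mul_self_sqrt (by norm_num)
  have hne : Real.sqrt 3 ≠ 0 := by positivity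
  fin_cases m
  · refine ⟨-6, by norm_num, fun i => ?_⟩
    fin_cases i <;>
      simp [SF, refNormal, mulVec, dotProduct, Fin.sum_univ_three, Matrix.vecHead, Matrix.vecTail] <;>
      field_simp <;> nlinarith [h3]
  · refine ⟨-6, by norm_num, fun i => ?_⟩
    fin_cases i <;>
      simp [SF, refNormal, mulVec, dotProduct, Fin.sum_univ_three, Matrix.vecHead, Matrix.vecTail] <;>
      field_simp <;> nlinarith [h3]
  · refine ⟨-6, by norm_num, fun i => ?_⟩
    fin_cases i <;>
      simp [SF, refNormal, mulVec, dotProduct, Fin.sum_univ_three, Matrix.vecHead, Matrix.vecTail] <;>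
      field_simp <;> nlinarith [h3]
  · refine ⟨2, by norm_num, fun i => ?_⟩
    fin_cases i <;>
      simp [SF, refNormal, mulVec, dotProduct, Fin.sum_univ_three, Matrix.vecHead, Matrix.vecTail] <;>
      field_simp <;> nlinarith [h3]
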